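/- (Suboptimality recursion for approximate H-step lookahead.) In a finite discounted MDP with |r(s,a)| ≤ Rmax for all (s,a), let V̂ : S → ℝ satisfy max_{s∈S} |V*(s) − V̂(s)| ≤ ε_v, fix H ≥ 1 and δ ≥ 0, and suppose W : S → ℝ is a bounded function such that for every s ∈ S there is an H-step policy π^s satisfying both (i) W(s) = Σ_{t=0}^{H−1} γ^t Σ_{s'} d_t(s')·r(s',π^s_t(s')) + γ^H Σ_{s'} d_H(s')·W(s'), where the d_t are the state distributions of π^s from s under the true model p, and (ii) max_π L_{H,V̂}(s,π;p) − L_{H,V̂}(s,π^s;p) ≤ δ, the maximum being over all H-step policies π. Then sup_{s∈S} (V*(s) − W(s)) ≤ (δ + 2·γ^H·ε_v)/(1−γ^H). -/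

import Mathlib

/-- State distribution at time `t` of a (possibly non-stationary) deterministic policy `π`
started from `s0`, under transition model `N`. -/
noncomputable def stateDist {S A : Type*} [Fintype S] [DecidableEq S]
    (N : S → A → S → ℝ) (π : ℕ → S → A) (s0 : S) : ℕ → S → ℝ
  | 0 => fun s => if s = s0 then 1 else 0
  | t + 1 => fun s' => ∑ s : S, stateDist N π s0 t s * N s (π t s) s'

/-- Discounted value of a (possibly non-stationary) deterministic policy. -/
noncomputable def value {S A : Type*} [Fintype S] [DecidableEq S]
    (p : S → A → S → ℝ) (r : S → A → ℝ) (γ : ℝ) (π : ℕ → S → A) (s0 : S) : ℝ :=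
  ∑' t : ℕ, γ ^ t * ∑ s : S, stateDist p π s0 t s * r s (π t s)

/-- Optimal value function: supremum of values over all deterministic policies. -/
noncomputable def vStar {S A : Type*} [Fintype S] [DecidableEq S]
    (p : S → A → S → ℝ) (r : S → A → ℝ) (γ : ℝ) (s0 : S) : ℝ :=
  ⨆ π : ℕ → S → A, value p r γ π s0

/-- H-step lookahead objective of an H-step policy `π` (only its first `H` maps are used),
under transition model `N`, with terminal value function `Vhat`. -/
noncomputable def lookahead {S A : Type*} [Fintype S] [DecidableEq S]
    (N : S → A → S → ℝ) (r : S → A → ℝ) (γ : ℝ) (Vhat : S → ℝ) (H : ℕ)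
    (π : ℕ → S → A) (s : S) : ℝ :=
  (∑ t ∈ Finset.range H, γ ^ t * ∑ s' : S, stateDist N π s t s' * r s' (π t s')) +
    γ ^ H * ∑ s' : S, stateDist N π s H s' * Vhat s'

section Aux
variable {S A : Type*} [Fintype S] [DecidableEq S]
variable {p : S → A → S → ℝ} {r : S → A → ℝ} {γ Rmax : ℝ}

lemma stateDist_nonneg (hp : ∀ s a s', 0 ≤ p s a s') (π : ℕ → S → A) (s0 : S) :
    ∀ t s, 0 ≤ stateDist p π s0 t s := by
  intro t
  induction t with
  | zero => intro s; simp only [stateDist]; split <;> norm_num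
  | succ t ih =>
    intro s
    exact Finset.sum_nonneg fun s' _ => mul_nonneg (ih s') (hp _ _ _)

lemma stateDist_sum (hp : ∀ s a, ∑ s' : S, p s a s' = 1) (π : ℕ → S → A) (s0 : S) :
    ∀ t, ∑ s : S, stateDist p π s0 t s = 1 := by
  intro t
  induction t with
  | zero => simp [stateDist]
  | succ t ih =>
    simp only [stateDist]
    rw [Finset.sum_comm]
    simp_rw [← Finset.mul_sum, hp, mul_one]
    exact ih

lemma weighted_abs_le {w f : S → ℝ} {C : ℝ} (hw : ∀ s, 0 ≤ w s) (hws : ∑ s : S, w s = 1)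
    (hf : ∀ s, |f s| ≤ C) : |∑ s : S, w s * f s| ≤ C := by
  calc |∑ s : S, w s * f s| ≤ ∑ s : S, |w s * f s| := Finset.abs_sum_le_sum_abs _ _
    _ = ∑ s : S, w s * |f s| := by simp_rw [abs_mul, abs_of_nonneg (hw _)]
    _ ≤ ∑ s : S, w s * C := Finset.sum_le_sum fun s _ => mul_le_mul_of_nonneg_left (hf s) (hw s)
    _ = C := by rw [← Finset.sum_mul, hws, one_mul]

lemma reward_abs_le (hp : ∀ s a s', 0 ≤ p s a s') (hps : ∀ s a, ∑ s' : S, p s a s' = 1)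
    (hr : ∀ s a, |r s a| ≤ Rmax) (π : ℕ → S → A) (s0 : S) (t : ℕ) :
    |∑ s : S, stateDist p π s0 t s * r s (π t s)| ≤ Rmax :=
  weighted_abs_le (stateDist_nonneg hp π s0 t) (stateDist_sum hps π s0 t) (fun s => hr s _)

lemma value_summable (hp : ∀ s a s', 0 ≤ p s a s') (hps : ∀ s a, ∑ s' : S, p s a s' = 1)
    (hγ0 : 0 < γ) (hγ1 : γ < 1) (hr : ∀ s a, |r s a| ≤ Rmax) (π : ℕ → S → A) (s0 : S) :
    Summable (fun t => γ ^ t * ∑ s : S, stateDist p π s0 t s * r s (π t s)) := by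
  apply Summable.of_norm_bounded (g := fun t => γ ^ t * Rmax)
    ((summable_geometric_of_lt_one hγ0.le hγ1).mul_right Rmax)
  intro t
  rw [Real.norm_eq_abs, abs_mul, abs_pow, abs_of_pos hγ0]
  exact mul_le_mul_of_nonneg_left (reward_abs_le hp hps hr π s0 t) (pow_nonneg hγ0.le t)

lemma value_abs_le (hp : ∀ s a s', 0 ≤ p s a s') (hps : ∀ s a, ∑ s' : S, p s a s' = 1)
    (hγ0 : 0 < γ) (hγ1 : γ < 1) (hr : ∀ s a, |r s a| ≤ Rmax) (π : ℕ → S → A) (s0 : S) :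
    |value p r γ π s0| ≤ Rmax / (1 - γ) := by
  have hsum := value_summable hp hps hγ0 hγ1 hr π s0
  have key : ∀ c : ℝ, Summable (fun t : ℕ => γ ^ t * c) ∧ (∑' t : ℕ, γ ^ t * c) = c / (1 - γ) := by
    intro c
    refine ⟨(summable_geometric_of_lt_one hγ0.le hγ1).mul_right c, ?_⟩
    rw [tsum_mul_right, tsum_geometric_of_lt_one hγ0.le hγ1]
    ring
  rw [abs_le]
  constructor
  · have hle : ∀ t : ℕ, γ ^ t * (-Rmax) ≤ γ ^ t * ∑ s : S, stateDist p π s0 t s * r s (π t s) :=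
      fun t => mul_le_mul_of_nonneg_left
        (neg_le_of_abs_le (reward_abs_le hp hps hr π s0 t)) (pow_nonneg hγ0.le t)
    have h := Summable.tsum_le_tsum hle (key (-Rmax)).1 hsum
    rw [(key (-Rmax)).2] at h
    have : -Rmax / (1 - γ) = -(Rmax / (1 - γ)) := by ring
    rw [this] at h
    exact h
  · have hle : ∀ t : ℕ, γ ^ t * ∑ s : S, stateDist p π s0 t s * r s (π t s) ≤ γ ^ t * Rmax :=
      fun t => mul_le_mul_of_nonneg_left
        (le_of_abs_le (reward_abs_le hp hps hr π s0 t)) (pow_nonneg hγ0.le t)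
    have h := Summable.tsum_le_tsum hle hsum (key Rmax).1
    rw [(key Rmax).2] at h
    exact h

lemma stateDist_add (π : ℕ → S → A) (s0 : S) (H : ℕ) :
    ∀ t s'', stateDist p π s0 (H + t) s'' =
      ∑ s' : S, stateDist p π s0 H s' * stateDist p (fun u => π (H + u)) s' t s'' := by
  intro t
  induction t with
  | zero =>
    intro s''
    simp only [Nat.add_zero, stateDist, mul_ite, mul_one, mul_zero]
    rw [Finset.sum_ite_eq]
    simp
  | succ t ih =>
    intro s''
    have : H + (t + 1) = (H + t) + 1 := by ring
    rw [this]
    simp only [stateDist]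
    simp_rw [ih, Finset.sum_mul]
    rw [Finset.sum_comm]
    congr 1
    ext s'
    rw [Finset.mul_sum]
    congr 1
    ext s
    ring

lemma value_decomp (hp : ∀ s a s', 0 ≤ p s a s') (hps : ∀ s a, ∑ s' : S, p s a s' = 1)
    (hγ0 : 0 < γ) (hγ1 : γ < 1) (hr : ∀ s a, |r s a| ≤ Rmax) (π : ℕ → S → A) (s0 : S) (H : ℕ) :
    value p r γ π s0 =
      (∑ t ∈ Finset.range H, γ ^ t * ∑ s : S, stateDist p π s0 t s * r s (π t s)) +
        γ ^ H * ∑ s' : S, stateDist p π s0 H s' * value p r γ (fun u => π (H + u)) s' := by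
  have hsum := value_summable hp hps hγ0 hγ1 hr π s0
  have hshift : ∀ s' : S,
      Summable (fun t : ℕ => γ ^ t * ∑ s : S, stateDist p (fun u => π (H + u)) s' t s * r s ((fun u => π (H + u)) t s)) :=
    fun s' => value_summable hp hps hγ0 hγ1 hr _ s'
  have hpt : ∀ t : ℕ,
      γ ^ (t + H) * ∑ s : S, stateDist p π s0 (t + H) s * r s (π (t + H) s) =
      ∑ s' : S, stateDist p π s0 H s' *
        (γ ^ H * (γ ^ t * ∑ s : S, stateDist p (fun u => π (H + u)) s' t s *
          r s (π (H + t) s))) := by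
    intro t
    rw [add_comm t H]
    simp_rw [stateDist_add π s0 H t, Finset.sum_mul, Finset.mul_sum]
    rw [Finset.sum_comm]
    refine Finset.sum_congr rfl fun s' _ => Finset.sum_congr rfl fun s _ => ?_
    rw [pow_add]
    ring
  have step : value p r γ π s0 =
      (∑ t ∈ Finset.range H, γ ^ t * ∑ s : S, stateDist p π s0 t s * r s (π t s)) +
        ∑' t : ℕ, γ ^ (t + H) * ∑ s : S, stateDist p π s0 (t + H) s * r s (π (t + H) s) := by
    rw [value, ← Summable.sum_add_tsum_nat_add H hsum]
  rw [step]
  congr 1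
  calc (∑' t : ℕ, γ ^ (t + H) * ∑ s : S, stateDist p π s0 (t + H) s * r s (π (t + H) s))
      = ∑' t : ℕ, ∑ s' : S, stateDist p π s0 H s' *
          (γ ^ H * (γ ^ t * ∑ s : S, stateDist p (fun u => π (H + u)) s' t s * r s (π (H + t) s))) := by
        exact tsum_congr hpt
    _ = ∑ s' : S, ∑' t : ℕ, stateDist p π s0 H s' *
          (γ ^ H * (γ ^ t * ∑ s : S, stateDist p (fun u => π (H + u)) s' t s * r s (π (H + t) s))) := by
        apply Summable.tsum_finsetSum
        intro s' _
        exact (((hshift s').mul_left (γ ^ H)).mul_left _)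
    _ = ∑ s' : S, stateDist p π s0 H s' * (γ ^ H * value p r γ (fun u => π (H + u)) s') := by
        congr 1
        ext s'
        rw [tsum_mul_left, tsum_mul_left]
        rfl
    _ = γ ^ H * ∑ s' : S, stateDist p π s0 H s' * value p r γ (fun u => π (H + u)) s' := by
        rw [Finset.mul_sum]
        congr 1
        ext s'
        ring

lemma lookahead_le (hp : ∀ s a s', 0 ≤ p s a s') (hps : ∀ s a, ∑ s' : S, p s a s' = 1)
    (hγ0 : 0 < γ) (hr : ∀ s a, |r s a| ≤ Rmax) {V : S → ℝ} {C : ℝ} (hV : ∀ s, |V s| ≤ C)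
    (H : ℕ) (π : ℕ → S → A) (s : S) :
    lookahead p r γ V H π s ≤ (∑ t ∈ Finset.range H, γ ^ t * Rmax) + γ ^ H * C := by
  unfold lookahead
  apply add_le_add
  · exact Finset.sum_le_sum fun t _ => mul_le_mul_of_nonneg_left
      (le_of_abs_le (reward_abs_le hp hps hr π s t)) (pow_nonneg hγ0.le t)
  · exact mul_le_mul_of_nonneg_left
      (le_of_abs_le (weighted_abs_le (stateDist_nonneg hp π s H) (stateDist_sum hps π s H) hV))
      (pow_nonneg hγ0.le H)

lemma lookahead_diff (hp : ∀ s a s', 0 ≤ p s a s') (hps : ∀ s a, ∑ s' : S, p s a s' = 1)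
    (hγ0 : 0 < γ) {V1 V2 : S → ℝ} {c : ℝ} (hV : ∀ s, V1 s ≤ V2 s + c)
    (H : ℕ) (π : ℕ → S → A) (s : S) :
    lookahead p r γ V1 H π s ≤ lookahead p r γ V2 H π s + γ ^ H * c := by
  unfold lookahead
  have h1 : ∑ s' : S, stateDist p π s H s' * V1 s' ≤
      (∑ s' : S, stateDist p π s H s' * V2 s') + c := by
    calc ∑ s' : S, stateDist p π s H s' * V1 s'
        ≤ ∑ s' : S, stateDist p π s H s' * (V2 s' + c) :=
          Finset.sum_le_sum fun s' _ =>
            mul_le_mul_of_nonneg_left (hV s') (stateDist_nonneg hp π s H s')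
      _ = (∑ s' : S, stateDist p π s H s' * V2 s') + c := by
          simp_rw [mul_add, Finset.sum_add_distrib, ← Finset.sum_mul,
            stateDist_sum hps π s H, one_mul]
  have h2 := mul_le_mul_of_nonneg_left h1 (pow_nonneg hγ0.le H)
  rw [mul_add] at h2
  linarith

end Aux

/-- Suboptimality recursion for approximate H-step lookahead: if `W` satisfies the H-step
fixed-point equation along policies `σ s` that are `δ`-approximate maximizers of the H-step
lookahead objective under the true model, then the suboptimality of `W` is bounded. -/
theorem approx_h_step_lookahead_recursion
    {S A : Type*} [Fintype S] [DecidableEq S] [Nonempty S] [Fintype A] [Nonempty A]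
    (p : S → A → S → ℝ) (r : S → A → ℝ) (γ Rmax εv δ : ℝ) (H : ℕ)
    (hp_nonneg : ∀ s a s', 0 ≤ p s a s')
    (hp_sum : ∀ s a, ∑ s' : S, p s a s' = 1)
    (hγ0 : 0 < γ) (hγ1 : γ < 1) (hH : 1 ≤ H) (hδ : 0 ≤ δ)
    (hr : ∀ s a, |r s a| ≤ Rmax)
    (Vhat : S → ℝ)
    (hεv : ∀ s, |vStar p r γ s - Vhat s| ≤ εv)
    (W : S → ℝ) (hWbdd : ∃ B, ∀ s, |W s| ≤ B)
    (σ : S → ℕ → S → A)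
    (hW : ∀ s, W s =
      (∑ t ∈ Finset.range H, γ ^ t * ∑ s' : S, stateDist p (σ s) s t s' * r s' (σ s t s')) +
        γ ^ H * ∑ s' : S, stateDist p (σ s) s H s' * W s')
    (hσ : ∀ s, (⨆ π : ℕ → S → A, lookahead p r γ Vhat H π s) -
      lookahead p r γ Vhat H (σ s) s ≤ δ) :
    (⨆ s : S, (vStar p r γ s - W s)) ≤ (δ + 2 * γ ^ H * εv) / (1 - γ ^ H) := by

  have hεv0 : 0 ≤ εv := (abs_nonneg _).trans (hεv (Classical.arbitrary S))
  have hγH1 : γ ^ H < 1 := pow_lt_one₀ hγ0.le hγ1 (by omega)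
  have hγHpos : 0 < γ ^ H := pow_pos hγ0 H
  -- value range bounded above
  have hvb : ∀ s0 : S, BddAbove (Set.range fun π : ℕ → S → A => value p r γ π s0) := by
    intro s0
    refine ⟨Rmax / (1 - γ), ?_⟩
    rintro _ ⟨π, rfl⟩
    exact le_of_abs_le (value_abs_le hp_nonneg hp_sum hγ0 hγ1 hr π s0)
  -- vStar bound
  have hvStar_abs : ∀ s : S, |vStar p r γ s| ≤ Rmax / (1 - γ) := by
    intro s
    rw [abs_le]
    constructor
    · exact le_trans (neg_le_of_abs_le
        (value_abs_le hp_nonneg hp_sum hγ0 hγ1 hr (Classical.arbitrary _) s))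
        (le_ciSup (hvb s) _)
    · exact ciSup_le fun π => le_of_abs_le (value_abs_le hp_nonneg hp_sum hγ0 hγ1 hr π s)
  have hVhat_abs : ∀ s : S, |Vhat s| ≤ Rmax / (1 - γ) + εv := by
    intro s
    have := hεv s
    have h2 := hvStar_abs s
    have : |Vhat s| ≤ |vStar p r γ s| + εv := by
      have h3 : |Vhat s| - |vStar p r γ s| ≤ |vStar p r γ s - Vhat s| := by
        rw [abs_sub_comm]
        exact abs_sub_abs_le_abs_sub _ _
      linarith [hεv s]
    linarith
  -- bddAbove of lookahead with V*
  have hlbStar : ∀ s : S,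
      BddAbove (Set.range fun π : ℕ → S → A => lookahead p r γ (vStar p r γ) H π s) := by
    intro s
    refine ⟨(∑ t ∈ Finset.range H, γ ^ t * Rmax) + γ ^ H * (Rmax / (1 - γ)), ?_⟩
    rintro _ ⟨π, rfl⟩
    exact lookahead_le hp_nonneg hp_sum hγ0 hr hvStar_abs H π s
  have hlbVhat : ∀ s : S,
      BddAbove (Set.range fun π : ℕ → S → A => lookahead p r γ Vhat H π s) := by
    intro s
    refine ⟨(∑ t ∈ Finset.range H, γ ^ t * Rmax) + γ ^ H * (Rmax / (1 - γ) + εv), ?_⟩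
    rintro _ ⟨π, rfl⟩
    exact lookahead_le hp_nonneg hp_sum hγ0 hr hVhat_abs H π s
  -- M := sup of suboptimality
  set M := ⨆ s : S, (vStar p r γ s - W s) with hMdef
  have hMbdd : BddAbove (Set.range fun s : S => vStar p r γ s - W s) :=
    (Set.finite_range _).bddAbove
  have hM : ∀ s : S, vStar p r γ s - W s ≤ M := fun s => le_ciSup hMbdd s
  -- main per-state chain
  have key : ∀ s : S, vStar p r γ s - W s ≤ δ + 2 * γ ^ H * εv + γ ^ H * M := by
    intro s
    -- step 1: vStar ≤ sup lookahead with V*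
    have step1 : vStar p r γ s ≤ ⨆ π : ℕ → S → A, lookahead p r γ (vStar p r γ) H π s := by
      apply ciSup_le
      intro π
      rw [value_decomp hp_nonneg hp_sum hγ0 hγ1 hr π s H]
      refine le_trans ?_ (le_ciSup (hlbStar s) π)
      unfold lookahead
      apply add_le_add_right
      apply mul_le_mul_of_nonneg_left _ (pow_nonneg hγ0.le H)
      apply Finset.sum_le_sum
      intro s' _
      exact mul_le_mul_of_nonneg_left (le_ciSup (hvb s') _)
        (stateDist_nonneg hp_nonneg π s H s')
    -- step 2: sup lookahead V* ≤ sup lookahead Vhat + γ^H εv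
    have step2 : (⨆ π : ℕ → S → A, lookahead p r γ (vStar p r γ) H π s) ≤
        (⨆ π : ℕ → S → A, lookahead p r γ Vhat H π s) + γ ^ H * εv := by
      apply ciSup_le
      intro π
      have h1 : ∀ s', vStar p r γ s' ≤ Vhat s' + εv := fun s' => by
        have := le_of_abs_le (hεv s'); linarith
      exact le_trans (lookahead_diff hp_nonneg hp_sum hγ0 h1 H π s)
        (add_le_add_left (le_ciSup (hlbVhat s) π) _)
    -- step 3: sup lookahead Vhat ≤ lookahead Vhat (σ s) + δ
    have step3 : (⨆ π : ℕ → S → A, lookahead p r γ Vhat H π s) ≤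
        lookahead p r γ Vhat H (σ s) s + δ := by
      have := hσ s; linarith
    -- step 4: lookahead Vhat (σ s) ≤ lookahead V* (σ s) + γ^H εv
    have step4 : lookahead p r γ Vhat H (σ s) s ≤
        lookahead p r γ (vStar p r γ) H (σ s) s + γ ^ H * εv := by
      have h1 : ∀ s', Vhat s' ≤ vStar p r γ s' + εv := fun s' => by
        have := neg_le_of_abs_le (hεv s'); linarith
      exact lookahead_diff hp_nonneg hp_sum hγ0 h1 H (σ s) s
    -- step 5: lookahead V* (σ s) ≤ W s + γ^H M
    have step5 : lookahead p r γ (vStar p r γ) H (σ s) s ≤ W s + γ ^ H * M := by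
      have h1 : ∀ s', vStar p r γ s' ≤ W s' + M := fun s' => by
        have := hM s'; linarith
      have h2 : lookahead p r γ (vStar p r γ) H (σ s) s ≤
          lookahead p r γ W H (σ s) s + γ ^ H * M :=
        lookahead_diff hp_nonneg hp_sum hγ0 h1 H (σ s) s
      have h3 : lookahead p r γ W H (σ s) s = W s := by
        unfold lookahead
        exact (hW s).symm
      linarith
    linarith
  have hMle : M ≤ δ + 2 * γ ^ H * εv + γ ^ H * M := ciSup_le key
  rw [le_div_iff₀ (by linarith : (0:ℝ) < 1 - γ ^ H)]
  nlinarith
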